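/- The class REG/2(⊙) of languages over {0,1} recognized by a deterministic finite automaton with at most 2 inkdots of (deterministic) advice is strictly contained in the class REG/R2(⊙) of languages recognized with bounded error by a deterministic finite automaton with randomized advice of at most 2 inkdots: REG/2(⊙) ⊆ REG/R2(⊙), and the language L_3 = { 0^m 1^m 0^m 1^m : m > 0 } is in REG/R2(⊙) but not in REG/2(⊙). -/

import Mathlib

/-- The marked word: the i-th symbol of `w` becomes `(w_i, true)` if `i ∈ S`,
and `(w_i, false)` otherwise. -/
def markWord {α : Type*} (w : List α) (S : Finset ℕ) : List (α × Bool) :=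
  w.zipIdx.map (fun p => (p.1, decide (p.2 ∈ S)))

/-- `L` is recognized by a deterministic finite automaton with at most `a n`
inkdots of advice on inputs of length `n`. -/
def RecognizedWithInkdots {α : Type*} (L : Set (List α)) (a : ℕ → ℕ) : Prop :=
  ∃ (σ : Type) (_ : Fintype σ) (M : DFA (α × Bool) σ) (h : ℕ → Finset ℕ),
    (∀ n, ∀ i ∈ h n, i < n) ∧
    (∀ n, (h n).card ≤ a n) ∧
    (∀ w : List α, w ∈ L ↔ markWord w (h w.length) ∈ M.accepts)

open scoped Classical in
/-- `L` is recognized with bounded error by a dfa with randomized advice of at most `k`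
inkdots: for each input length `n` there is a finitely supported probability
distribution `D n` over inkdot patterns (sets of at most `k` positions in
`{0,…,n-1}`), such that members are accepted with probability at least `2/3` and
non-members are rejected with probability at least `2/3`. -/
def RecognizedWithRandomInkdots {α : Type*} (L : Set (List α)) (k : ℕ) : Prop :=
  ∃ (σ : Type) (_ : Fintype σ) (M : DFA (α × Bool) σ) (D : ℕ → (Finset ℕ →₀ NNReal)),
    (∀ n, (∑ S ∈ (D n).support, D n S) = 1) ∧
    (∀ n, ∀ S ∈ (D n).support, (∀ i ∈ S, i < n) ∧ S.card ≤ k) ∧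
    (∀ w : List α,
      (w ∈ L → (2 / 3 : NNReal) ≤ ∑ S ∈ (D w.length).support,
          (if markWord w S ∈ M.accepts then D w.length S else 0)) ∧
      (w ∉ L → (2 / 3 : NNReal) ≤ ∑ S ∈ (D w.length).support,
          (if markWord w S ∈ M.accepts then 0 else D w.length S)))

/-- The language `L_3 = { 0^m 1^m 0^m 1^m : m > 0 }` (`false` plays the role of `0`
and `true` the role of `1`). -/
def L3 : Set (List Bool) :=
  { w | ∃ m : ℕ, 0 < m ∧
      w = List.replicate m false ++ List.replicate m true ++
          List.replicate m false ++ List.replicate m true }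

namespace InkAux

def markFrom {α : Type*} (k : ℕ) : List α → Finset ℕ → List (α × Bool)
  | [], _ => []
  | a :: w, S => (a, decide (k ∈ S)) :: markFrom (k + 1) w S

theorem enum_aux {α : Type*} (S : Finset ℕ) :
    ∀ (w : List α) (k : ℕ),
      (w.zipIdx k).map (fun p => (p.1, decide (p.2 ∈ S))) = markFrom k w S := by
  intro w
  induction w with
  | nil => intro k; rfl
  | cons a w ih => intro k; simp [List.zipIdx, markFrom, ih]

theorem markWord_eq {α : Type*} (w : List α) (S : Finset ℕ) :
    markWord w S = markFrom 0 w S := enum_aux S w 0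

theorem markFrom_append {α : Type*} (S : Finset ℕ) :
    ∀ (u v : List α) (k : ℕ),
      markFrom k (u ++ v) S = markFrom k u S ++ markFrom (k + u.length) v S := by
  intro u
  induction u with
  | nil => simp [markFrom]
  | cons a u ih =>
    intro v k
    have e : k + 1 + u.length = k + (u.length + 1) := by omega
    simp only [List.cons_append, markFrom, ih, List.length_cons, e, List.append_eq]

theorem markFrom_length {α : Type*} (S : Finset ℕ) :
    ∀ (w : List α) (k : ℕ), (markFrom k w S).length = w.length := by
  intro w; induction w with
  | nil => simp [markFrom]
  | cons a w ih => intro k; simp [markFrom, ih]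

theorem markFrom_replicate_of_free {α : Type*} {S : Finset ℕ} (a : α) :
    ∀ (n k : ℕ), (∀ i, k ≤ i → i < k + n → i ∉ S) →
      markFrom k (List.replicate n a) S = List.replicate n (a, false) := by
  intro n
  induction n with
  | zero => simp [markFrom]
  | succ n ih =>
    intro k hfree
    rw [List.replicate_succ, markFrom, List.replicate_succ]
    have h1 : k ∉ S := hfree k le_rfl (by omega)
    have h2 : markFrom (k + 1) (List.replicate n a) S = List.replicate n (a, false) :=
      ih (k + 1) (fun i h1 h2 => hfree i (by omega) (by omega))
    simp [h1, h2]

theorem markFrom_congr {α : Type*} {S S' : Finset ℕ} :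
    ∀ (w : List α) (k : ℕ), (∀ i, k ≤ i → i < k + w.length → (i ∈ S ↔ i ∈ S')) →
      markFrom k w S = markFrom k w S' := by
  intro w
  induction w with
  | nil => simp [markFrom]
  | cons a w ih =>
    intro k h
    simp only [List.length_cons] at h
    rw [markFrom, markFrom,
      ih (k + 1) (fun i hi1 hi2 => h i (by omega) (by omega))]
    have hk := h k le_rfl (by omega)
    simp [hk]

theorem markFrom_fst {α : Type*} (S : Finset ℕ) :
    ∀ (w : List α) (k : ℕ), (markFrom k w S).map Prod.fst = w := by
  intro w; induction w with
  | nil => simp [markFrom]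
  | cons a w ih => intro k; simp [markFrom, ih]

theorem markFrom_inj {α : Type*} {S S' : Finset ℕ} :
    ∀ (w : List α) (k : ℕ), markFrom k w S = markFrom k w S' →
      ∀ i, k ≤ i → i < k + w.length → (i ∈ S ↔ i ∈ S') := by
  intro w
  induction w with
  | nil => intro k _ i h1 h2; simp at h2; omega
  | cons a w ih =>
    intro k h i h1 h2
    rw [markFrom, markFrom, List.cons_eq_cons] at h
    obtain ⟨h0, htl⟩ := h
    rcases eq_or_lt_of_le h1 with rfl | hlt
    · have hd : decide (k ∈ S) = decide (k ∈ S') := by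
        simpa using congrArg Prod.snd h0
      constructor <;> intro hm
      · simpa [hm] using hd.symm
      · simpa [hm] using hd
    · exact ih (k + 1) htl i (by omega) (by simp at h2 ⊢; omega)

/-! markWord-level corollaries -/

theorem markWord_length {α : Type*} (w : List α) (S : Finset ℕ) :
    (markWord w S).length = w.length := by rw [markWord_eq]; exact markFrom_length S w 0

theorem markWord_fst {α : Type*} (w : List α) (S : Finset ℕ) :
    (markWord w S).map Prod.fst = w := by rw [markWord_eq]; exact markFrom_fst S w 0

theorem markWord_congr {α : Type*} {S S' : Finset ℕ} (w : List α)
    (h : ∀ i, i < w.length → (i ∈ S ↔ i ∈ S')) : markWord w S = markWord w S' := by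
  rw [markWord_eq, markWord_eq]
  exact markFrom_congr w 0 (fun i _ h2 => h i (by omega))

theorem markWord_inj {α : Type*} {S S' : Finset ℕ} {w : List α}
    (h : markWord w S = markWord w S') : ∀ i, i < w.length → (i ∈ S ↔ i ∈ S') := by
  rw [markWord_eq, markWord_eq] at h
  intro i hi
  exact markFrom_inj w 0 h i (by omega) (by omega)

theorem snoc_mark {α : Type*} (w : List α) (x : α) (S : Finset ℕ) :
    markWord (w ++ [x]) S = markWord w S ++ [(x, decide (w.length ∈ S))] := by
  rw [markWord_eq, markWord_eq, markFrom_append]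
  simp [markFrom]

theorem snoc_nodot {α : Type*} {w : List α} {S : Finset ℕ} (h : w.length ∉ S) (x : α) :
    markWord (w ++ [x]) S = markWord w S ++ [(x, false)] := by
  rw [snoc_mark]; simp [h]

theorem snoc_dot {α : Type*} (w : List α) (S : Finset ℕ) (x : α) :
    markWord (w ++ [x]) (insert w.length S) =
      markWord w S ++ [(x, true)] := by
  rw [snoc_mark]
  have h2 : markWord w (insert w.length S) = markWord w S :=
    markWord_congr w (fun i hi => by
      simp only [Finset.mem_insert]
      constructor
      · rintro (rfl | h)
        · omega
        · exact h
      · intro h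
        exact Or.inr h)
  rw [h2]
  simp


/-! ## The automaton for part 2 -/

inductive St
  | start | dead | A | B0 | B1 | C0 | C1 | C2 | D0 | D1 | D2
deriving DecidableEq

instance : Fintype St :=
  ⟨{St.start, St.dead, St.A, St.B0, St.B1, St.C0, St.C1, St.C2, St.D0, St.D1, St.D2},
    by intro x; cases x <;> simp⟩

def step2 : St → Bool × Bool → St
  | St.start, (false, false) => St.A
  | St.A, (false, false) => St.A
  | St.A, (true, false) => St.B0
  | St.A, (true, true) => St.B1
  | St.B0, (true, false) => St.B0
  | St.B0, (false, false) => St.C0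
  | St.B0, (false, true) => St.C1
  | St.B1, (true, false) => St.B1
  | St.B1, (false, false) => St.C1
  | St.B1, (false, true) => St.C2
  | St.C0, (false, false) => St.C0
  | St.C0, (true, false) => St.D0
  | St.C0, (true, true) => St.D1
  | St.C1, (false, false) => St.C1
  | St.C1, (true, false) => St.D1
  | St.C1, (true, true) => St.D2
  | St.C2, (false, false) => St.C2
  | St.C2, (true, false) => St.D2
  | St.D0, (true, false) => St.D0
  | St.D1, (true, false) => St.D1
  | St.D2, (true, false) => St.D2
  | _, _ => St.dead

def M2 : DFA (Bool × Bool) St := ⟨step2, St.start, {St.D2}⟩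

def wB (a b : ℕ) : List Bool := List.replicate a false ++ List.replicate b true
def wC (a b c : ℕ) : List Bool := wB a b ++ List.replicate c false
def wD (a b c d : ℕ) : List Bool := wC a b c ++ List.replicate d true

theorem wB_length (a b : ℕ) : (wB a b).length = a + b := by simp [wB]
theorem wC_length (a b c : ℕ) : (wC a b c).length = a + b + c := by simp [wC, wB_length]
theorem wD_length (a b c d : ℕ) : (wD a b c d).length = a + b + c + d := by
  simp [wD, wC_length]

def DA (u : List (Bool × Bool)) : Prop :=
  ∃ a, 1 ≤ a ∧ u = markWord (List.replicate a false) (∅ : Finset ℕ)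
def DB (j : ℕ) (u : List (Bool × Bool)) : Prop :=
  ∃ a b S, 1 ≤ a ∧ 1 ≤ b ∧ S ⊆ {a} ∧ S.card = j ∧ u = markWord (wB a b) S
def DC (j : ℕ) (u : List (Bool × Bool)) : Prop :=
  ∃ a b c S, 1 ≤ a ∧ 1 ≤ b ∧ 1 ≤ c ∧ S ⊆ {a, a + b} ∧ S.card = j ∧
    u = markWord (wC a b c) S
def DD (j : ℕ) (u : List (Bool × Bool)) : Prop :=
  ∃ a b c d S, 1 ≤ a ∧ 1 ≤ b ∧ 1 ≤ c ∧ 1 ≤ d ∧ S ⊆ {a, a + b, a + b + c} ∧ S.card = j ∧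
    u = markWord (wD a b c d) S

def Desc : St → List (Bool × Bool) → Prop
  | .start, u => u = []
  | .dead, _ => True
  | .A, u => DA u
  | .B0, u => DB 0 u
  | .B1, u => DB 1 u
  | .C0, u => DC 0 u
  | .C1, u => DC 1 u
  | .C2, u => DC 2 u
  | .D0, u => DD 0 u
  | .D1, u => DD 1 u
  | .D2, u => DD 2 u

theorem tr_start : DA ([] ++ [((false : Bool), (false : Bool))]) := by
  refine ⟨1, le_rfl, ?_⟩
  simp [markWord, List.zipIdx]

theorem trA {u} (h : DA u) : DA (u ++ [((false : Bool), (false : Bool))]) := by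
  obtain ⟨a, ha, rfl⟩ := h
  refine ⟨a + 1, by omega, ?_⟩
  rw [List.replicate_succ', snoc_nodot (by simp)]

theorem trAB {u} (e : Bool) (h : DA u) : DB e.toNat (u ++ [((true : Bool), e)]) := by
  obtain ⟨a, ha, rfl⟩ := h
  cases e with
  | false =>
    refine ⟨a, 1, ∅, ha, le_rfl, by simp, by simp, ?_⟩
    have hw : wB a 1 = List.replicate a false ++ [true] := by simp [wB]
    rw [hw, snoc_nodot (by simp)]
  | true =>
    refine ⟨a, 1, {a}, ha, le_rfl, le_rfl, by simp, ?_⟩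
    have hw : wB a 1 = List.replicate a false ++ [true] := by simp [wB]
    have hset : ({a} : Finset ℕ) =
        insert (List.replicate a false : List Bool).length (∅ : Finset ℕ) := by simp
    rw [hw, hset, snoc_dot]

theorem trBB {u j} (h : DB j u) : DB j (u ++ [((true : Bool), (false : Bool))]) := by
  obtain ⟨a, b, S, ha, hb, hsub, hcard, rfl⟩ := h
  refine ⟨a, b + 1, S, ha, by omega, hsub, hcard, ?_⟩
  have hw : wB a (b + 1) = wB a b ++ [true] := by
    simp [wB, List.replicate_succ']
  rw [hw, snoc_nodot ?hh]
  case hh =>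
    rw [wB_length]
    intro hm
    have := hsub hm
    simp at this
    omega

theorem trBC {u j} (e : Bool) (h : DB j u) :
    DC (j + e.toNat) (u ++ [((false : Bool), e)]) := by
  obtain ⟨a, b, S, ha, hb, hsub, hcard, rfl⟩ := h
  have hsub' : S ⊆ {a, a + b} := hsub.trans (by intro i hi; simp at hi ⊢; tauto)
  have hab : a + b ∉ S := by
    intro hm; have := hsub hm; simp at this; omega
  have hw : wC a b 1 = wB a b ++ [false] := by simp [wC]
  cases e with
  | false =>
    refine ⟨a, b, 1, S, ha, hb, le_rfl, hsub', by simpa using hcard, ?_⟩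
    rw [hw, snoc_nodot (by rw [wB_length]; exact hab)]
  | true =>
    refine ⟨a, b, 1, insert (a + b) S, ha, hb, le_rfl, ?_, ?_, ?_⟩
    · exact Finset.insert_subset_iff.mpr ⟨by simp, hsub'⟩
    · rw [Finset.card_insert_of_notMem hab, hcard]; rfl
    · have hset : insert (a + b) S = insert ((wB a b : List Bool)).length S := by
        rw [wB_length]
      rw [hw, hset, snoc_dot]

theorem trCC {u j} (h : DC j u) : DC j (u ++ [((false : Bool), (false : Bool))]) := by
  obtain ⟨a, b, c, S, ha, hb, hc, hsub, hcard, rfl⟩ := h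
  refine ⟨a, b, c + 1, S, ha, hb, by omega, hsub, hcard, ?_⟩
  have hw : wC a b (c + 1) = wC a b c ++ [false] := by
    simp [wC, List.replicate_succ']
  rw [hw, snoc_nodot ?hh]
  case hh =>
    rw [wC_length]
    intro hm
    have := hsub hm
    simp at this
    omega

theorem trCD {u j} (e : Bool) (h : DC j u) :
    DD (j + e.toNat) (u ++ [((true : Bool), e)]) := by
  obtain ⟨a, b, c, S, ha, hb, hc, hsub, hcard, rfl⟩ := h
  have hsub' : S ⊆ {a, a + b, a + b + c} := hsub.trans (by intro i hi; simp at hi ⊢; tauto)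
  have habc : a + b + c ∉ S := by
    intro hm; have := hsub hm; simp at this; omega
  have hw : wD a b c 1 = wC a b c ++ [true] := by simp [wD]
  cases e with
  | false =>
    refine ⟨a, b, c, 1, S, ha, hb, hc, le_rfl, hsub', by simpa using hcard, ?_⟩
    rw [hw, snoc_nodot (by rw [wC_length]; exact habc)]
  | true =>
    refine ⟨a, b, c, 1, insert (a + b + c) S, ha, hb, hc, le_rfl, ?_, ?_, ?_⟩
    · exact Finset.insert_subset_iff.mpr ⟨by simp, hsub'⟩
    · rw [Finset.card_insert_of_notMem habc, hcard]; rfl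
    · have hset : insert (a + b + c) S = insert ((wC a b c : List Bool)).length S := by
        rw [wC_length]
      rw [hw, hset, snoc_dot]

theorem trDD {u j} (h : DD j u) : DD j (u ++ [((true : Bool), (false : Bool))]) := by
  obtain ⟨a, b, c, d, S, ha, hb, hc, hd, hsub, hcard, rfl⟩ := h
  refine ⟨a, b, c, d + 1, S, ha, hb, hc, by omega, hsub, hcard, ?_⟩
  have hw : wD a b c (d + 1) = wD a b c d ++ [true] := by
    simp [wD, List.replicate_succ']
  rw [hw, snoc_nodot ?hh]
  case hh =>
    rw [wD_length]
    intro hm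
    have := hsub hm
    simp at this
    omega

theorem invariant (u : List (Bool × Bool)) : Desc (M2.eval u) u := by
  induction u using List.reverseRecOn with
  | nil => rfl
  | append_singleton l x ih =>
    rw [DFA.eval_append_singleton]
    obtain ⟨s, d⟩ := x
    generalize hq : M2.eval l = q at ih
    have hstep : M2.step = step2 := rfl
    cases q <;> cases s <;> cases d <;>
      simp only [hstep, step2, Desc] at ih ⊢ <;>
      first
        | trivial
        | (subst ih; exact tr_start)
        | exact trA ih
        | exact trAB false ih
        | exact trAB true ih
        | exact trBB ih
        | exact trBC false ih
        | exact trBC true ih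
        | exact trCC ih
        | exact trCD false ih
        | exact trCD true ih
        | exact trDD ih

/-! ## DFA helper lemmas -/

theorem evalFrom_cons {γ σ : Type*} (M : DFA γ σ) (q : σ) (x : γ) (l : List γ) :
    M.evalFrom q (x :: l) = M.evalFrom (M.step q x) l := rfl

theorem evalFrom_replicate {γ σ : Type*} (M : DFA γ σ) (x : γ) :
    ∀ (n : ℕ) (q : σ), M.evalFrom q (List.replicate n x) = (fun p => M.step p x)^[n] q := by
  intro n
  induction n with
  | zero => intro q; rfl
  | succ n ih =>
    intro q
    rw [List.replicate_succ, Function.iterate_succ_apply]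
    exact ih (M.step q x)

theorem evalFrom_fixed {γ σ : Type*} (M : DFA γ σ) {x : γ} {q : σ}
    (h : M.step q x = q) (n : ℕ) : M.evalFrom q (List.replicate n x) = q := by
  rw [evalFrom_replicate]
  exact Function.iterate_fixed h n

theorem iterate_periodic {σ : Type*} [Fintype σ] (g : σ → σ) (z : σ) (j : ℕ)
    (hj : Fintype.card σ ≤ j) :
    g^[j + (Fintype.card σ).factorial] z = g^[j] z := by
  set s := Fintype.card σ with hs
  have hni : ¬ Function.Injective (fun i : Fin (s + 1) => g^[i] z) := by
    intro hinj
    have := Fintype.card_le_of_injective _ hinj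
    simp [hs] at this
  rw [Function.not_injective_iff] at hni
  obtain ⟨i, i', hii, hne⟩ := hni
  wlog hlt : (i : ℕ) < (i' : ℕ) generalizing i i'
  · refine this i' i hii.symm (Ne.symm hne) ?_
    have : (i : ℕ) ≠ (i' : ℕ) := fun hh => hne (Fin.ext hh)
    omega
  set c : ℕ := (i' : ℕ) - i with hc
  have hc1 : 1 ≤ c := by omega
  have hcs : c ≤ s := by have := i'.isLt; omega
  have key : ∀ l, (i : ℕ) ≤ l → g^[l + c] z = g^[l] z := by
    intro l hl
    have e1 : l + c = (l - i) + (i' : ℕ) := by omega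
    have e2 : l = (l - i) + (i : ℕ) := by omega
    rw [e1, Function.iterate_add_apply, ← hii, ← Function.iterate_add_apply, ← e2]
  have key2 : ∀ (k l : ℕ), (i : ℕ) ≤ l → g^[l + k * c] z = g^[l] z := by
    intro k
    induction k with
    | zero => simp
    | succ k ih =>
      intro l hl
      have e : l + (k + 1) * c = (l + c) + k * c := by ring
      rw [e, ih (l + c) (by omega), key l hl]
  obtain ⟨k, hk⟩ := Nat.dvd_factorial hc1 hcs
  rw [hk, Nat.mul_comm]
  exact key2 k j (by have := i.isLt; omega)

/-! ## Block decomposition uniqueness -/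

theorem peel {x y : Bool} (hxy : x ≠ y) :
    ∀ (a a' : ℕ) (u u' : List Bool),
      List.replicate a x ++ y :: u = List.replicate a' x ++ y :: u' → a = a' ∧ u = u' := by
  intro a
  induction a with
  | zero =>
    intro a' u u' h
    cases a' with
    | zero => simpa using h
    | succ a' => simp [List.replicate_succ] at h; exact absurd h.1.symm hxy
  | succ a ih =>
    intro a' u u' h
    cases a' with
    | zero => simp [List.replicate_succ] at h; exact absurd h.1 hxy
    | succ a' =>
      simp only [List.replicate_succ, List.cons_append, List.cons_eq_cons] at h
      obtain ⟨h1, h2⟩ := ih a' u u' h.2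
      exact ⟨by omega, h2⟩

theorem wD_unique {a b c d a' b' c' d' : ℕ}
    (hb : 1 ≤ b) (hc : 1 ≤ c) (hd : 1 ≤ d)
    (hb' : 1 ≤ b') (hc' : 1 ≤ c') (hd' : 1 ≤ d')
    (h : wD a b c d = wD a' b' c' d') :
    a = a' ∧ b = b' ∧ c = c' ∧ d = d' := by
  obtain ⟨b1, rfl⟩ : ∃ k, b = k + 1 := ⟨b - 1, by omega⟩
  obtain ⟨b1', rfl⟩ : ∃ k, b' = k + 1 := ⟨b' - 1, by omega⟩
  obtain ⟨c1, rfl⟩ : ∃ k, c = k + 1 := ⟨c - 1, by omega⟩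
  obtain ⟨c1', rfl⟩ : ∃ k, c' = k + 1 := ⟨c' - 1, by omega⟩
  obtain ⟨d1, rfl⟩ : ∃ k, d = k + 1 := ⟨d - 1, by omega⟩
  obtain ⟨d1', rfl⟩ : ∃ k, d' = k + 1 := ⟨d' - 1, by omega⟩
  simp only [wD, wC, wB, List.replicate_succ, List.append_assoc, List.cons_append] at h
  obtain ⟨e1, h⟩ := peel (by simp) _ _ _ _ h
  obtain ⟨e2, h⟩ := peel (by simp) _ _ _ _ h
  obtain ⟨e3, h⟩ := peel (by simp) _ _ _ _ h
  have := congrArg List.length h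
  simp at this
  omega

/-! ## Acceptance characterization -/

theorem accept_structure {w : List Bool} {T : Finset ℕ}
    (hacc : markWord w T ∈ M2.accepts) :
    ∃ a b c d, 1 ≤ a ∧ 1 ≤ b ∧ 1 ≤ c ∧ 1 ≤ d ∧ w = wD a b c d ∧
      ∃ S : Finset ℕ, S ⊆ {a, a + b, a + b + c} ∧ S.card = 2 ∧
        (∀ i, i < w.length → (i ∈ T ↔ i ∈ S)) := by
  have hinv := invariant (markWord w T)
  rw [DFA.mem_accepts] at hacc
  have hD : M2.eval (markWord w T) = St.D2 := hacc
  rw [hD] at hinv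
  obtain ⟨a, b, c, d, S, ha, hb, hc, hd, hsub, hcard, heq⟩ := hinv
  have hw : w = wD a b c d := by
    have := congrArg (List.map Prod.fst) heq
    rwa [markWord_fst, markWord_fst] at this
  refine ⟨a, b, c, d, ha, hb, hc, hd, hw, S, hsub, hcard, ?_⟩
  rw [hw] at heq ⊢
  exact markWord_inj heq


/-! ## Evaluating the member word -/

theorem markFrom_rep_append {S : Finset ℕ} (x : Bool) (l : List Bool) (n k : ℕ)
    (hfree : ∀ i, k ≤ i → i < k + n → i ∉ S) :
    markFrom k (List.replicate n x ++ l) S =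
      List.replicate n (x, false) ++ markFrom (k + n) l S := by
  rw [markFrom_append, markFrom_replicate_of_free x n k hfree, List.length_replicate]

theorem mark_member (k : ℕ) (S : Finset ℕ) (hS : S ⊆ {k + 1, 2 * (k + 1), 3 * (k + 1)}) :
    markWord (wD (k + 1) (k + 1) (k + 1) (k + 1)) S =
      (((false : Bool), (false : Bool)) :: List.replicate k ((false : Bool), (false : Bool))) ++
        ((((true : Bool), decide ((k + 1) ∈ S)) :: List.replicate k ((true : Bool), (false : Bool))) ++
          ((((false : Bool), decide (2 * (k + 1) ∈ S)) :: List.replicate k ((false : Bool), (false : Bool))) ++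
            (((true : Bool), decide (3 * (k + 1) ∈ S)) :: List.replicate k ((true : Bool), (false : Bool))))) := by
  have hmem : ∀ i, i ∈ S → i = k + 1 ∨ i = 2 * (k + 1) ∨ i = 3 * (k + 1) := by
    intro i hi
    have := hS hi
    simpa using this
  have hw : wD (k + 1) (k + 1) (k + 1) (k + 1) =
      List.replicate (k + 1) false ++
        (true :: (List.replicate k true ++
          (false :: (List.replicate k false ++ (true :: List.replicate k true))))) := by
    simp [wD, wC, wB, List.replicate_succ]
  rw [hw, markWord_eq,
    markFrom_rep_append false _ (k + 1) 0
      (fun i h1 h2 hm => by rcases hmem i hm with h | h | h <;> omega),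
    markFrom]
  rw [markFrom_rep_append true _ k (0 + (k + 1) + 1)
      (fun i h1 h2 hm => by rcases hmem i hm with h | h | h <;> omega),
    markFrom]
  rw [markFrom_rep_append false _ k (0 + (k + 1) + 1 + k + 1)
      (fun i h1 h2 hm => by rcases hmem i hm with h | h | h <;> omega),
    markFrom]
  rw [markFrom_replicate_of_free true k (0 + (k + 1) + 1 + k + 1 + k + 1)
      (fun i h1 h2 hm => by rcases hmem i hm with h | h | h <;> omega)]
  have e3 : 0 + (k + 1) + 1 + k + 1 + k = 3 * (k + 1) := by omega
  have e2 : 0 + (k + 1) + 1 + k = 2 * (k + 1) := by omega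
  have e1 : 0 + (k + 1) = k + 1 := by omega
  rw [e3, e2, e1]
  simp [List.replicate_succ, List.append_assoc]

theorem seg_eval (q r : St) (s d : Bool) (n : ℕ)
    (h1 : step2 q (s, d) = r) (h2 : step2 r (s, false) = r) :
    M2.evalFrom q ((s, d) :: List.replicate n (s, false)) = r := by
  rw [evalFrom_cons]
  show M2.evalFrom (step2 q (s, d)) _ = r
  rw [h1]
  exact evalFrom_fixed M2 h2 n

theorem eval_scenario (k : ℕ) (d1 d2 d3 : Bool)
    (hsum : d1.toNat + d2.toNat + d3.toNat = 2) :
    M2.eval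
      ((((false : Bool), (false : Bool)) :: List.replicate k ((false : Bool), (false : Bool))) ++
        ((((true : Bool), d1) :: List.replicate k ((true : Bool), (false : Bool))) ++
          ((((false : Bool), d2) :: List.replicate k ((false : Bool), (false : Bool))) ++
            (((true : Bool), d3) :: List.replicate k ((true : Bool), (false : Bool)))))) = St.D2 := by
  rw [DFA.eval, DFA.evalFrom_of_append, DFA.evalFrom_of_append, DFA.evalFrom_of_append]
  cases d1 <;> cases d2 <;> cases d3 <;> simp only [Bool.toNat_true, Bool.toNat_false] at hsum
  · omega
  · omega
  · omega
  · rw [seg_eval M2.start St.A false false k rfl rfl,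
      seg_eval St.A St.B0 true false k rfl rfl,
      seg_eval St.B0 St.C1 false true k rfl rfl,
      seg_eval St.C1 St.D2 true true k rfl rfl]
  · omega
  · rw [seg_eval M2.start St.A false false k rfl rfl,
      seg_eval St.A St.B1 true true k rfl rfl,
      seg_eval St.B1 St.C1 false false k rfl rfl,
      seg_eval St.C1 St.D2 true true k rfl rfl]
  · rw [seg_eval M2.start St.A false false k rfl rfl,
      seg_eval St.A St.B1 true true k rfl rfl,
      seg_eval St.B1 St.C2 false true k rfl rfl,
      seg_eval St.C2 St.D2 true false k rfl rfl]
  · omega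

/-! ## The advice distribution for part 2 -/

def SA (m : ℕ) : Finset ℕ := {m, 2 * m}
def SB (m : ℕ) : Finset ℕ := {2 * m, 3 * m}
def SC (m : ℕ) : Finset ℕ := {m, 3 * m}

theorem SA_ne_SB {m : ℕ} (hm : 1 ≤ m) : SA m ≠ SB m := by
  intro h
  have : m ∈ SB m := h ▸ (by simp [SA])
  simp [SB] at this
  omega

theorem SA_ne_SC {m : ℕ} (hm : 1 ≤ m) : SA m ≠ SC m := by
  intro h
  have : 2 * m ∈ SC m := h ▸ (by simp [SA])
  simp [SC] at this
  omega

theorem SB_ne_SC {m : ℕ} (hm : 1 ≤ m) : SB m ≠ SC m := by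
  intro h
  have : m ∈ SB m := h ▸ (by simp [SC])
  simp [SB] at this
  omega

noncomputable def trip (k : ℕ) : Finset ℕ →₀ NNReal :=
  ⟨{SA (k + 1), SB (k + 1), SC (k + 1)},
    fun S => if S = SA (k + 1) ∨ S = SB (k + 1) ∨ S = SC (k + 1) then 1 / 3 else 0, by
    intro a
    simp only [Finset.mem_insert, Finset.mem_singleton]
    split_ifs with h
    · simp only [h, iff_true]
      norm_num
    · simp [h]⟩

theorem trip_support (k : ℕ) :
    (trip k).support = {SA (k + 1), SB (k + 1), SC (k + 1)} := rfl

theorem trip_apply_SA (k : ℕ) : trip k (SA (k + 1)) = 1 / 3 := by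
  show (if _ then _ else _) = _
  rw [if_pos (Or.inl rfl)]

theorem trip_apply_SB (k : ℕ) : trip k (SB (k + 1)) = 1 / 3 := by
  show (if _ then _ else _) = _
  rw [if_pos (Or.inr (Or.inl rfl))]

theorem trip_apply_SC (k : ℕ) : trip k (SC (k + 1)) = 1 / 3 := by
  show (if _ then _ else _) = _
  rw [if_pos (Or.inr (Or.inr rfl))]

theorem sum_trip_support (k : ℕ) (f : Finset ℕ → NNReal) :
    (∑ S ∈ (trip k).support, f S) =
      f (SA (k + 1)) + f (SB (k + 1)) + f (SC (k + 1)) := by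
  have hm : 1 ≤ k + 1 := by omega
  rw [trip_support]
  rw [Finset.sum_insert (by simp [SA_ne_SB hm, SA_ne_SC hm]),
    Finset.sum_insert (by simp [SB_ne_SC hm]), Finset.sum_singleton]
  ring

noncomputable def D3 (n : ℕ) : Finset ℕ →₀ NNReal :=
  if 4 ∣ n ∧ n ≠ 0 then trip (n / 4 - 1) else Finsupp.single ∅ 1

theorem D3_of_mul (m : ℕ) (hm : 1 ≤ m) : D3 (4 * m) = trip (m - 1) := by
  rw [D3, if_pos ⟨⟨m, rfl⟩, by omega⟩]
  congr 1
  omega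

/-! ## Acceptance facts for part 2 -/

theorem member_accepted {m : ℕ} (hm : 1 ≤ m) (S : Finset ℕ)
    (hS : S ⊆ {m, 2 * m, 3 * m})
    (hsum : (decide (m ∈ S)).toNat + (decide (2 * m ∈ S)).toNat
        + (decide (3 * m ∈ S)).toNat = 2) :
    markWord (wD m m m m) S ∈ M2.accepts := by
  obtain ⟨k, rfl⟩ : ∃ k, m = k + 1 := ⟨m - 1, by omega⟩
  rw [DFA.mem_accepts]
  have := mark_member k S hS
  rw [this]
  have := eval_scenario k (decide ((k + 1) ∈ S)) (decide (2 * (k + 1) ∈ S))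
    (decide (3 * (k + 1) ∈ S)) hsum
  rw [this]
  rfl

theorem pair_member {w : List Bool} {m : ℕ} (hm : 1 ≤ m) (hlen : w.length = 4 * m)
    {T T' : Finset ℕ} (hacc : markWord w T ∈ M2.accepts) (hacc' : markWord w T' ∈ M2.accepts)
    (h1 : m ∈ T ∪ T') (h2 : 2 * m ∈ T ∪ T') (h3 : 3 * m ∈ T ∪ T') : w ∈ L3 := by
  obtain ⟨a, b, c, d, ha, hb, hc, hd, hw, S, hsub, hcard, hiff⟩ := accept_structure hacc
  obtain ⟨a', b', c', d', ha', hb', hc', hd', hw', S', hsub', hcard', hiff'⟩ :=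
    accept_structure hacc'
  obtain ⟨e1, e2, e3, e4⟩ := wD_unique hb hc hd hb' hc' hd' (hw ▸ hw')
  subst e1; subst e2; subst e3; subst e4
  have hlen' : a + b + c + d = 4 * m := by
    rw [hw, wD_length] at hlen
    omega
  have key : ∀ i, i ∈ T ∪ T' → i < w.length → i ∈ ({a, a + b, a + b + c} : Finset ℕ) := by
    intro i hi hilt
    rcases Finset.mem_union.mp hi with h | h
    · exact hsub ((hiff i hilt).mp h)
    · exact hsub' ((hiff' i hilt).mp h)
  have hwl : w.length = 4 * m := hlen
  have k1 := key m h1 (by omega)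
  have k2 := key (2 * m) h2 (by omega)
  have k3 := key (3 * m) h3 (by omega)
  simp only [Finset.mem_insert, Finset.mem_singleton] at k1 k2 k3
  obtain ⟨ea, eb, ec, ed⟩ : a = m ∧ b = m ∧ c = m ∧ d = m := by omega
  exact ⟨m, hm, by rw [hw, ea, eb, ec, ed]; simp [wD, wC, wB]⟩

/-! ## Part 2: L3 has randomized 2-inkdot advice -/

theorem part2 : RecognizedWithRandomInkdots L3 2 := by
  classical
  refine ⟨St, inferInstance, M2, D3, ?_, ?_, ?_⟩
  · intro n
    by_cases h : 4 ∣ n ∧ n ≠ 0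
    · rw [D3, if_pos h, sum_trip_support, trip_apply_SA, trip_apply_SB, trip_apply_SC]
      rw [← NNReal.coe_inj]
      push_cast
      norm_num
    · rw [D3, if_neg h, Finsupp.support_single_ne_zero _ one_ne_zero, Finset.sum_singleton,
        Finsupp.single_eq_same]
  · intro n S hS
    by_cases h : 4 ∣ n ∧ n ≠ 0
    · obtain ⟨⟨q, rfl⟩, h0⟩ := h
      have hq1 : 1 ≤ q := by omega
      rw [D3_of_mul q hq1, trip_support] at hS
      have e : q - 1 + 1 = q := by omega
      rw [e] at hS
      simp only [Finset.mem_insert, Finset.mem_singleton] at hS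
      rcases hS with rfl | rfl | rfl
      · refine ⟨by intro i hi; simp [SA] at hi; omega, ?_⟩
        refine le_trans (Finset.card_insert_le _ _) (by simp)
      · refine ⟨by intro i hi; simp [SB] at hi; omega, ?_⟩
        refine le_trans (Finset.card_insert_le _ _) (by simp)
      · refine ⟨by intro i hi; simp [SC] at hi; omega, ?_⟩
        refine le_trans (Finset.card_insert_le _ _) (by simp)
    · rw [D3, if_neg h, Finsupp.support_single_ne_zero _ one_ne_zero] at hS
      simp only [Finset.mem_singleton] at hS
      subst hS
      simp
  · intro w
    constructor
    · intro hw
      obtain ⟨m, hm0, hweq⟩ := hw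
      obtain ⟨k, rfl⟩ : ∃ k, m = k + 1 := ⟨m - 1, by omega⟩
      have hm : 1 ≤ k + 1 := by omega
      have hw2 : w = wD (k + 1) (k + 1) (k + 1) (k + 1) := by
        rw [hweq]; simp [wD, wC, wB]
      have hlen : w.length = 4 * (k + 1) := by rw [hw2, wD_length]; ring
      rw [hlen, D3_of_mul (k + 1) hm, Nat.add_sub_cancel, sum_trip_support]
      have dA1 : decide ((k + 1) ∈ SA (k + 1)) = true := by simp [SA]
      have dA2 : decide (2 * (k + 1) ∈ SA (k + 1)) = true := by simp [SA]
      have dA3 : decide (3 * (k + 1) ∈ SA (k + 1)) = false := by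
        simp [SA]
      have dB1 : decide ((k + 1) ∈ SB (k + 1)) = false := by
        simp [SB]
      have dB2 : decide (2 * (k + 1) ∈ SB (k + 1)) = true := by simp [SB]
      have dB3 : decide (3 * (k + 1) ∈ SB (k + 1)) = true := by simp [SB]
      have dC1 : decide ((k + 1) ∈ SC (k + 1)) = true := by simp [SC]
      have dC2 : decide (2 * (k + 1) ∈ SC (k + 1)) = false := by
        simp [SC]
      have dC3 : decide (3 * (k + 1) ∈ SC (k + 1)) = true := by simp [SC]
      have accA : markWord w (SA (k + 1)) ∈ M2.accepts := by
        rw [hw2]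
        exact member_accepted hm _ (by intro i hi; simp [SA] at hi ⊢; omega)
          (by rw [dA1, dA2, dA3]; rfl)
      have accB : markWord w (SB (k + 1)) ∈ M2.accepts := by
        rw [hw2]
        exact member_accepted hm _ (by intro i hi; simp [SB] at hi ⊢; omega)
          (by rw [dB1, dB2, dB3]; rfl)
      have accC : markWord w (SC (k + 1)) ∈ M2.accepts := by
        rw [hw2]
        exact member_accepted hm _ (by intro i hi; simp [SC] at hi ⊢; omega)
          (by rw [dC1, dC2, dC3]; rfl)
      rw [if_pos accA, if_pos accB, if_pos accC, trip_apply_SA, trip_apply_SB, trip_apply_SC]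
      rw [← NNReal.coe_le_coe]
      push_cast
      norm_num
    · intro hnw
      by_cases h : 4 ∣ w.length ∧ w.length ≠ 0
      · obtain ⟨⟨q, hq⟩, h0⟩ := h
        have hq1 : 1 ≤ q := by omega
        obtain ⟨k, rfl⟩ : ∃ k, q = k + 1 := ⟨q - 1, by omega⟩
        rw [hq, D3_of_mul (k + 1) hq1, Nat.add_sub_cancel, sum_trip_support]
        have hAB : ¬ (markWord w (SA (k + 1)) ∈ M2.accepts ∧ markWord w (SB (k + 1)) ∈ M2.accepts) := by
          rintro ⟨hA, hB⟩
          exact hnw (pair_member hq1 hq hA hB (by simp [SA, SB]) (by simp [SA, SB])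
            (by simp [SA, SB]))
        have hAC : ¬ (markWord w (SA (k + 1)) ∈ M2.accepts ∧ markWord w (SC (k + 1)) ∈ M2.accepts) := by
          rintro ⟨hA, hC⟩
          exact hnw (pair_member hq1 hq hA hC (by simp [SA, SC]) (by simp [SA, SC])
            (by simp [SA, SC]))
        have hBC : ¬ (markWord w (SB (k + 1)) ∈ M2.accepts ∧ markWord w (SC (k + 1)) ∈ M2.accepts) := by
          rintro ⟨hB, hC⟩
          exact hnw (pair_member hq1 hq hB hC (by simp [SB, SC]) (by simp [SB, SC])
            (by simp [SB, SC]))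
        by_cases hA : markWord w (SA (k + 1)) ∈ M2.accepts
        · have hB : ¬ markWord w (SB (k + 1)) ∈ M2.accepts := fun hB => hAB ⟨hA, hB⟩
          have hC : ¬ markWord w (SC (k + 1)) ∈ M2.accepts := fun hC => hAC ⟨hA, hC⟩
          rw [if_pos hA, if_neg hB, if_neg hC, trip_apply_SB, trip_apply_SC]
          rw [← NNReal.coe_le_coe]
          push_cast
          norm_num
        · by_cases hB : markWord w (SB (k + 1)) ∈ M2.accepts
          · have hC : ¬ markWord w (SC (k + 1)) ∈ M2.accepts := fun hC => hBC ⟨hB, hC⟩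
            rw [if_neg hA, if_pos hB, if_neg hC, trip_apply_SA, trip_apply_SC]
            rw [← NNReal.coe_le_coe]
            push_cast
            norm_num
          · by_cases hC : markWord w (SC (k + 1)) ∈ M2.accepts
            · rw [if_neg hA, if_neg hB, if_pos hC, trip_apply_SA, trip_apply_SB]
              rw [← NNReal.coe_le_coe]
              push_cast
              norm_num
            · rw [if_neg hA, if_neg hB, if_neg hC, trip_apply_SA, trip_apply_SB, trip_apply_SC]
              rw [← NNReal.coe_le_coe]
              push_cast
              norm_num
      · rw [D3, if_neg h, Finsupp.support_single_ne_zero _ one_ne_zero, Finset.sum_singleton,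
          Finsupp.single_eq_same]
        have hrej : ¬ markWord w (∅ : Finset ℕ) ∈ M2.accepts := by
          intro hacc
          obtain ⟨a, b, c, d, ha, hb, hc, hd, hw, S, hsub, hcard, hiff⟩ := accept_structure hacc
          obtain ⟨x, hx⟩ := Finset.card_pos.mp (by omega : 0 < S.card)
          have hxb := hsub hx
          simp only [Finset.mem_insert, Finset.mem_singleton] at hxb
          have hxlt : x < w.length := by
            rw [hw, wD_length]
            rcases hxb with rfl | rfl | rfl <;> omega
          exact absurd ((hiff x hxlt).mpr hx) (by simp)
        rw [if_neg hrej]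
        rw [← NNReal.coe_le_coe]
        push_cast
        norm_num

/-! ## Part 1: deterministic advice is a special case -/

theorem part1 (L : Set (List Bool)) (h : RecognizedWithInkdots L (fun _ => 2)) :
    RecognizedWithRandomInkdots L 2 := by
  classical
  obtain ⟨σ, F, M, hf, hlt, hcard, hacc⟩ := h
  refine ⟨σ, F, M, fun n => Finsupp.single (hf n) 1, ?_, ?_, ?_⟩
  · intro n
    rw [Finsupp.support_single_ne_zero _ one_ne_zero, Finset.sum_singleton,
      Finsupp.single_eq_same]
  · intro n S hS
    rw [Finsupp.support_single_ne_zero _ one_ne_zero, Finset.mem_singleton] at hS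
    subst hS
    exact ⟨fun i hi => hlt n i hi, hcard n⟩
  · intro w
    constructor
    · intro hw
      rw [Finsupp.support_single_ne_zero _ one_ne_zero, Finset.sum_singleton,
        if_pos ((hacc w).mp hw), Finsupp.single_eq_same]
      rw [← NNReal.coe_le_coe]
      push_cast
      norm_num
    · intro hnw
      rw [Finsupp.support_single_ne_zero _ one_ne_zero, Finset.sum_singleton,
        if_neg (fun hx => hnw ((hacc w).mpr hx)), Finsupp.single_eq_same]
      rw [← NNReal.coe_le_coe]
      push_cast
      norm_num

/-! ## Part 3: no deterministic 2-inkdot advice for L3 -/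

theorem iterate_periodic' {σ : Type*} [Fintype σ] (g : σ → σ) (z : σ) {j f : ℕ}
    (hj : Fintype.card σ ≤ j) (hf : f = (Fintype.card σ).factorial) :
    g^[j + f] z = g^[j] z := by
  subst hf
  exact iterate_periodic g z j hj

theorem swap_accept {σ : Type} [Fintype σ] (M : DFA (Bool × Bool) σ) (S : Finset ℕ)
    {s f : ℕ} (hs : s = Fintype.card σ) (hff : f = s.factorial)
    (A B : List Bool) (x y : Bool)
    (hfree : ∀ i, A.length ≤ i → i < A.length + 2 * (s + f) → i ∉ S) :
    (markWord (A ++ (List.replicate (s + f + f) x ++ (List.replicate s y ++ B))) S ∈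
        M.accepts) ↔
      (markWord (A ++ (List.replicate (s + f) x ++ (List.replicate (s + f) y ++ B))) S ∈
        M.accepts) := by
  rw [markWord_eq, markWord_eq]
  simp only [markFrom_append, List.length_replicate]
  rw [markFrom_replicate_of_free x (s + f + f) (0 + A.length)
      (fun i h1 h2 => hfree i (by omega) (by omega)),
    markFrom_replicate_of_free y s (0 + A.length + (s + f + f))
      (fun i h1 h2 => hfree i (by omega) (by omega)),
    markFrom_replicate_of_free x (s + f) (0 + A.length)
      (fun i h1 h2 => hfree i (by omega) (by omega)),
    markFrom_replicate_of_free y (s + f) (0 + A.length + (s + f))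
      (fun i h1 h2 => hfree i (by omega) (by omega))]
  rw [show 0 + A.length + (s + f + f) + s = A.length + 2 * (s + f) from by omega,
    show 0 + A.length + (s + f) + (s + f) = A.length + 2 * (s + f) from by omega]
  rw [DFA.mem_accepts, DFA.mem_accepts]
  have key : ∀ q : σ,
      M.evalFrom (M.evalFrom q (List.replicate (s + f + f) (x, false)))
          (List.replicate s (y, false)) =
        M.evalFrom (M.evalFrom q (List.replicate (s + f) (x, false)))
          (List.replicate (s + f) (y, false)) := by
    intro q
    rw [evalFrom_replicate, evalFrom_replicate, evalFrom_replicate, evalFrom_replicate]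
    have h1 : (fun p => M.step p (x, false))^[s + f + f] q =
        (fun p => M.step p (x, false))^[s + f] q :=
      iterate_periodic' _ q (by omega) (by rw [hff, hs])
    rw [h1]
    exact (iterate_periodic' _ _ (by omega) (by rw [hff, hs])).symm
  show M.evalFrom M.start _ ∈ _ ↔ M.evalFrom M.start _ ∈ _
  rw [DFA.evalFrom_of_append, DFA.evalFrom_of_append,
    DFA.evalFrom_of_append, DFA.evalFrom_of_append, DFA.evalFrom_of_append,
    DFA.evalFrom_of_append, key]

theorem part3 : ¬ RecognizedWithInkdots L3 (fun _ => 2) := by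
  rintro ⟨σ, F, M, hf, hlt, hcard, hacc⟩
  have hs1 : 1 ≤ Fintype.card σ := Fintype.card_pos_iff.mpr ⟨M.start⟩
  set s := Fintype.card σ with hs
  set f := s.factorial with hff
  have hf1 : 1 ≤ f := Nat.factorial_pos s
  set m := 2 * s + 2 * f + 1 with hm
  set S := hf (4 * m) with hSdef
  have hScard : S.card ≤ 2 := hcard (4 * m)
  have hpigeon :
      (∀ i, m - (s + f) ≤ i → i < m + (s + f) → i ∉ S) ∨
      (∀ i, 2 * m - (s + f) ≤ i → i < 2 * m + (s + f) → i ∉ S) ∨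
      (∀ i, 3 * m - (s + f) ≤ i → i < 3 * m + (s + f) → i ∉ S) := by
    by_contra hcon
    push_neg at hcon
    obtain ⟨⟨d1, hd11, hd12, hd13⟩, ⟨d2, hd21, hd22, hd23⟩, ⟨d3, hd31, hd32, hd33⟩⟩ := hcon
    have hcd : ({d1, d2, d3} : Finset ℕ).card ≤ S.card := by
      refine Finset.card_le_card ?_
      intro i hi
      simp only [Finset.mem_insert, Finset.mem_singleton] at hi
      rcases hi with rfl | rfl | rfl <;> assumption
    have h3 : ({d1, d2, d3} : Finset ℕ).card = 3 := by
      rw [Finset.card_insert_of_notMem (by simp; omega),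
        Finset.card_insert_of_notMem (by simp; omega), Finset.card_singleton]
    omega
  have hmemL3 : wD m m m m ∈ L3 := ⟨m, by omega, by simp [wD, wC, wB]⟩
  have hlen1 : (wD m m m m).length = 4 * m := by rw [wD_length]; omega
  have hacc1 : markWord (wD m m m m) S ∈ M.accepts := by
    have h := (hacc _).mp hmemL3
    rwa [hlen1, ← hSdef] at h
  have final : ∀ a b c d : ℕ, 1 ≤ a → 1 ≤ b → 1 ≤ c → 1 ≤ d →
      a + b + c + d = 4 * m → ¬ (a = m ∧ b = m ∧ c = m ∧ d = m) →
      markWord (wD a b c d) S ∈ M.accepts → False := by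
    intro a b c d ha hb hc hd hsum hne haccm
    have hlen2 : (wD a b c d).length = 4 * m := by rw [wD_length]; omega
    have : wD a b c d ∈ L3 := by
      refine (hacc _).mpr ?_
      rwa [hlen2, ← hSdef]
    obtain ⟨m', hm', heq⟩ := this
    have heq2 : wD a b c d = wD m' m' m' m' := by rw [heq]; simp [wD, wC, wB]
    have h4 := wD_unique hb hc hd (by omega) (by omega) (by omega) heq2
    have hlen3 : (wD m' m' m' m').length = 4 * m' := by rw [wD_length]; omega
    have : 4 * m' = 4 * m := by rw [← hlen3, ← heq2, hlen2]
    exact hne (by omega)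
  have h1F : List.replicate m (false : Bool) =
      List.replicate (s + f + 1) false ++ List.replicate (s + f) false := by
    rw [← List.replicate_add]; congr 1; omega
  have h1T : List.replicate m (true : Bool) =
      List.replicate (s + f) true ++ List.replicate (s + f + 1) true := by
    rw [← List.replicate_add]; congr 1; omega
  have h2F : List.replicate m (false : Bool) =
      List.replicate (s + f) false ++ List.replicate (s + f + 1) false := by
    rw [← List.replicate_add]; congr 1; omega
  have h2T : List.replicate m (true : Bool) =
      List.replicate (s + f + 1) true ++ List.replicate (s + f) true := by
    rw [← List.replicate_add]; congr 1; omega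
  have hPF : List.replicate (m + f) (false : Bool) =
      List.replicate (s + f + 1) false ++ List.replicate (s + f + f) false := by
    rw [← List.replicate_add]; congr 1; omega
  have hMT : List.replicate (m - f) (true : Bool) =
      List.replicate s true ++ List.replicate (s + f + 1) true := by
    rw [← List.replicate_add]; congr 1; omega
  have hPT : List.replicate (m + f) (true : Bool) =
      List.replicate (s + f + 1) true ++ List.replicate (s + f + f) true := by
    rw [← List.replicate_add]; congr 1; omega
  have hMF : List.replicate (m - f) (false : Bool) =
      List.replicate s false ++ List.replicate (s + f + 1) false := by
    rw [← List.replicate_add]; congr 1; omega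
  rcases hpigeon with hfree | hfree | hfree
  · -- boundary 1 : blocks (m+f, m-f, m, m)
    set A := List.replicate (s + f + 1) (false : Bool) with hA
    set B := List.replicate (s + f + 1) (true : Bool) ++
        ((List.replicate (s + f + 1) (false : Bool) ++ List.replicate (s + f) (false : Bool)) ++
          (List.replicate (s + f) (true : Bool) ++ List.replicate (s + f + 1) (true : Bool)))
      with hB
    have hw : wD m m m m = A ++ (List.replicate (s + f) false ++
        (List.replicate (s + f) true ++ B)) := by
      simp only [wD, wC, wB]
      rw [h1F, h1T]
      simp only [hA, hB, List.append_assoc]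
    have hw' : wD (m + f) (m - f) m m = A ++ (List.replicate (s + f + f) false ++
        (List.replicate s true ++ B)) := by
      simp only [wD, wC, wB]
      rw [hPF, hMT, h1F, h1T]
      simp only [hA, hB, List.append_assoc]
    have hAlen : A.length = s + f + 1 := by simp [hA]
    have hx := (swap_accept M S hs hff A B false true
        (by rw [hAlen]; intro i hi1 hi2; exact hfree i (by omega) (by omega))).mpr
      (by rw [← hw]; exact hacc1)
    rw [← hw'] at hx
    exact final (m + f) (m - f) m m (by omega) (by omega) (by omega) (by omega)
      (by omega) (by omega) hx
  · -- boundary 2 : blocks (m, m+f, m-f, m)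
    set A := (List.replicate (s + f) (false : Bool) ++
        List.replicate (s + f + 1) (false : Bool)) ++
        List.replicate (s + f + 1) (true : Bool) with hA
    set B := List.replicate (s + f + 1) (false : Bool) ++
        (List.replicate (s + f + 1) (true : Bool) ++ List.replicate (s + f) (true : Bool))
      with hB
    have hw : wD m m m m = A ++ (List.replicate (s + f) true ++
        (List.replicate (s + f) false ++ B)) := by
      simp only [wD, wC, wB]
      rw [h2F, h2T]
      simp only [hA, hB, List.append_assoc]
    have hw' : wD m (m + f) (m - f) m = A ++ (List.replicate (s + f + f) true ++
        (List.replicate s false ++ B)) := by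
      simp only [wD, wC, wB]
      rw [hPT, hMF, h2F, h2T]
      simp only [hA, hB, List.append_assoc]
    have hAlen : A.length = 3 * (s + f) + 2 := by simp [hA]; omega
    have hx := (swap_accept M S hs hff A B true false
        (by rw [hAlen]; intro i hi1 hi2; exact hfree i (by omega) (by omega))).mpr
      (by rw [← hw]; exact hacc1)
    rw [← hw'] at hx
    exact final m (m + f) (m - f) m (by omega) (by omega) (by omega) (by omega)
      (by omega) (by omega) hx
  · -- boundary 3 : blocks (m, m, m+f, m-f)
    set A := (List.replicate (s + f + 1) (false : Bool) ++
        List.replicate (s + f) (false : Bool)) ++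
        ((List.replicate (s + f) (true : Bool) ++ List.replicate (s + f + 1) (true : Bool)) ++
          List.replicate (s + f + 1) (false : Bool)) with hA
    set B := List.replicate (s + f + 1) (true : Bool) with hB
    have hw : wD m m m m = A ++ (List.replicate (s + f) false ++
        (List.replicate (s + f) true ++ B)) := by
      simp only [wD, wC, wB]
      rw [h1F, h1T]
      simp only [hA, hB, List.append_assoc]
    have hw' : wD m m (m + f) (m - f) = A ++ (List.replicate (s + f + f) false ++
        (List.replicate s true ++ B)) := by
      simp only [wD, wC, wB]
      rw [hPF, hMT, h1F, h1T]
      simp only [hA, hB, List.append_assoc]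
    have hAlen : A.length = 5 * (s + f) + 3 := by simp [hA, hB]; omega
    have hx := (swap_accept M S hs hff A B false true
        (by rw [hAlen]; intro i hi1 hi2; exact hfree i (by omega) (by omega))).mpr
      (by rw [← hw]; exact hacc1)
    rw [← hw'] at hx
    exact final m m (m + f) (m - f) (by omega) (by omega) (by omega) (by omega)
      (by omega) (by omega) hx

end InkAux

/-- `REG/2(⊙) ⊊ REG/R2(⊙)` over the alphabet `{0,1}`, witnessed by `L_3`. -/
theorem randomized_two_inkdots_strictly_stronger :
    (∀ L : Set (List Bool),
        RecognizedWithInkdots L (fun _ => 2) → RecognizedWithRandomInkdots L 2) ∧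
    RecognizedWithRandomInkdots L3 2 ∧
    ¬ RecognizedWithInkdots L3 (fun _ => 2) :=
  ⟨fun L h => InkAux.part1 L h, InkAux.part2, InkAux.part3⟩
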